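/- Let R be a ring with unity, let p, a, q, m ∈ R, let m' ∈ R satisfy m*m'*m = m, and suppose there exist p', q' ∈ R with p'*p*m = m and m*q*q' = m. If u = m*q*a*p + 1 − m*m' is invertible in R with inverse u⁻¹, then b = p*u⁻¹*m*q is the inverse of a along p*m*q; that is, (p*m*q)*a*b = p*m*q = b*a*(p*m*q) and there exist x, y ∈ R with b = x*(p*m*q) and b = (p*m*q)*y. -/

import Mathlib

/-- `b` is an inverse of `a` along `d`. -/
def InvAlong {S : Type*} [Ring S] (a d b : S) : Prop :=
  d * a * b = d ∧ b * a * d = d ∧ (∃ x, b = x * d) ∧ (∃ y, b = d * y)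

/-- If `u = m*q*a*p + 1 - m*m'` is invertible with inverse `ui`, then `p*ui*m*q`
is the inverse of `a` along `p*m*q`. -/
theorem stmt2 {R : Type*} [Ring R] (p a q m m' p' q' ui : R)
    (hm : m * m' * m = m) (hp : p' * p * m = m) (hq : m * q * q' = m)
    (hu1 : (m * q * a * p + 1 - m * m') * ui = 1)
    (hu2 : ui * (m * q * a * p + 1 - m * m') = 1) :
    InvAlong a (p * m * q) (p * ui * m * q) := by
  have hA' : m * m' * (m * q * a * p + 1 - m * m') = m * q * a * p := by
    have h : m * m' * (m * q * a * p + 1 - m * m')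
        = m * m' * m * q * a * p + m * m' - m * m' * m * m' := by noncomm_ring
    rw [h, hm]; noncomm_ring
  have A : m * q * a * p * ui = m * m' := by
    calc m * q * a * p * ui = m * m' * (m * q * a * p + 1 - m * m') * ui := by rw [hA']
    _ = m * m' * ((m * q * a * p + 1 - m * m') * ui) := by rw [mul_assoc]
    _ = m * m' := by rw [hu1, mul_one]
  have hum : (m * q * a * p + 1 - m * m') * m = m * q * a * p * m := by
    have h : (m * q * a * p + 1 - m * m') * m
        = m * q * a * p * m + m - m * m' * m := by noncomm_ring
    rw [h, hm]; noncomm_ring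
  have B : ui * (m * q * a * p * m) = m := by
    calc ui * (m * q * a * p * m) = ui * ((m * q * a * p + 1 - m * m') * m) := by rw [hum]
    _ = ui * (m * q * a * p + 1 - m * m') * m := by noncomm_ring
    _ = m := by rw [hu2, one_mul]
  have hC : (1 - m * m') * (m * q * a * p + 1 - m * m') = 1 - m * m' := by
    have h : (1 - m * m') * (m * q * a * p + 1 - m * m')
        = (m * q * a * p + 1 - m * m') - m * m' * (m * q * a * p + 1 - m * m') := by
      noncomm_ring
    rw [h, hA']; noncomm_ring
  have hC2 : (1 - m * m') * ui = 1 - m * m' := by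
    calc (1 - m * m') * ui
        = (1 - m * m') * (m * q * a * p + 1 - m * m') * ui := by rw [hC]
    _ = (1 - m * m') * ((m * q * a * p + 1 - m * m') * ui) := by rw [mul_assoc]
    _ = 1 - m * m' := by rw [hu1, mul_one]
  have C : ui * m = m * m' * (ui * m) := by
    have h := congrArg (· * m) hC2
    change (1 - m * m') * ui * m = (1 - m * m') * m at h
    have h1 : (1 - m * m') * ui * m = ui * m - m * m' * (ui * m) := by noncomm_ring
    have h2 : (1 - m * m') * m = m - m * m' * m := by noncomm_ring
    rw [h1, h2, hm, sub_self] at h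
    exact sub_eq_zero.mp h
  refine ⟨?_, ?_, ⟨p * ui * p', ?_⟩, ⟨q' * m' * ui * m * q, ?_⟩⟩
  · calc p * m * q * a * (p * ui * m * q)
        = p * (m * q * a * p * ui) * (m * q) := by noncomm_ring
    _ = p * (m * m') * (m * q) := by rw [A]
    _ = p * (m * m' * m) * q := by noncomm_ring
    _ = p * m * q := by rw [hm]
  · calc p * ui * m * q * a * (p * m * q)
        = p * (ui * (m * q * a * p * m)) * q := by noncomm_ring
    _ = p * m * q := by rw [B]
  · calc p * ui * m * q = p * ui * (p' * p * m) * q := by rw [hp]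
    _ = p * ui * p' * (p * m * q) := by noncomm_ring
  · calc p * ui * m * q = p * (ui * m) * q := by noncomm_ring
    _ = p * (m * m' * (ui * m)) * q := by rw [← C]
    _ = p * (m * q * q') * (m' * ui * m * q) := by rw [hq]; noncomm_ring
    _ = p * m * q * (q' * m' * ui * m * q) := by noncomm_ring
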